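/- arXiv:2210.00999 — 3 statements merged into one kernel-verified Lean document; each statement's English description precedes it below -/
import Mathlib

section
/- Let $\pi(a)=\int \pi(a|s)q(s)\,ds$ with posterior $p(s|a)=\pi(a|s)q(s)/\pi(a)$. For any positive integer $K$, the function $w(s^{(0:K)}\mid a) := \dfrac{p(s^{(0)}|a)\prod_{k=1}^{K} q(s^{(k)})}{\frac{1}{K+1}\sum_{k=0}^{K} \frac{p(s^{(k)}|a)}{q(s^{(k)})}}$ is a normalized probability density in $(s^{(0)},\ldots,s^{(K)})$, i.e. $\int w(s^{(0:K)}\mid a)\, ds^{(0)}\cdots ds^{(K)} = 1$. -/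
open MeasureTheory Real

/-- The self-normalized importance weighting density
`w(s⁰⁻ᴷ | a) = p(s⁰|a) ∏_{k=1}^K q(sᵏ) / ((1/(K+1)) ∑_k p(sᵏ|a)/q(sᵏ))`
is a normalized probability density over the tuple `(s⁰, …, sᴷ)`. -/
theorem w_is_normalized_density
    {S : Type*} [MeasurableSpace S]
    (νS : Measure S) [SigmaFinite νS]
    (q : S → ℝ) (f : S → ℝ)  -- `f s` is `π(a|s)` for the fixed action `a`
    (hq_pos : ∀ s, 0 < q s) (hf_pos : ∀ s, 0 < f s)
    (hq_meas : Measurable q) (hf_meas : Measurable f)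
    (hq_norm : ∫ s, q s ∂νS = 1)
    (πa : ℝ) (hπa : πa = ∫ s, f s * q s ∂νS) (hπa_pos : 0 < πa)
    (post : S → ℝ) (hpost : ∀ s, post s = f s * q s / πa)
    (K : ℕ) (hK : 0 < K)
    (w : (Fin (K + 1) → S) → ℝ)
    (hw : ∀ sv, w sv =
      (post (sv 0) * ∏ k ∈ Finset.univ.erase (0 : Fin (K + 1)), q (sv k)) /
        ((1 / (K + 1 : ℝ)) * ∑ k : Fin (K + 1), post (sv k) / q (sv k))) :
    ∫ sv, w sv ∂(Measure.pi fun _ : Fin (K + 1) => νS) = 1 := by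
  letI : MeasureSpace S := ⟨νS⟩
  have hq_int : Integrable q νS := by
    by_contra h
    rw [integral_undef h] at hq_norm
    norm_num at hq_norm
  set μ : Measure (Fin (K + 1) → S) := Measure.pi fun _ : Fin (K + 1) => νS with hμ
  have hsum_pos : ∀ sv : Fin (K + 1) → S, 0 < ∑ k : Fin (K + 1), f (sv k) :=
    fun sv => Finset.sum_pos (fun k _ => hf_pos (sv k)) ⟨0, Finset.mem_univ 0⟩
  set g : Fin (K + 1) → (Fin (K + 1) → S) → ℝ := fun j sv =>
    f (sv j) * (∏ k : Fin (K + 1), q (sv k)) / ∑ k : Fin (K + 1), f (sv k) with hg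
  -- Rewrite w in terms of g 0
  have hw' : ∀ sv, w sv = (K + 1 : ℝ) * g 0 sv := by
    intro sv
    have hprod : (∏ k : Fin (K + 1), q (sv k))
        = q (sv 0) * ∏ k ∈ Finset.univ.erase (0 : Fin (K + 1)), q (sv k) :=
      (Finset.mul_prod_erase Finset.univ (fun k => q (sv k)) (Finset.mem_univ 0)).symm
    have hsum : (∑ k : Fin (K + 1), post (sv k) / q (sv k))
        = (∑ k : Fin (K + 1), f (sv k)) / πa := by
      rw [Finset.sum_div]
      refine Finset.sum_congr rfl fun k _ => ?_
      have h1 : q (sv k) ≠ 0 := (hq_pos (sv k)).ne'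
      have h2 : πa ≠ 0 := hπa_pos.ne'
      rw [hpost]
      field_simp
    rw [hw, hsum, hpost]
    simp only [hg]
    rw [hprod]
    have h1 : (∑ k : Fin (K + 1), f (sv k)) ≠ 0 := (hsum_pos sv).ne'
    have h2 : πa ≠ 0 := hπa_pos.ne'
    have h3 : ((K : ℝ) + 1) ≠ 0 := by positivity
    field_simp
  -- measurability of g j
  have hg_meas : ∀ j, Measurable (g j) := by
    intro j
    apply Measurable.div
    · exact (hf_meas.comp (measurable_pi_apply j)).mul
        (Finset.measurable_prod _ fun k _ => hq_meas.comp (measurable_pi_apply k))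
    · exact Finset.measurable_sum _ fun k _ => hf_meas.comp (measurable_pi_apply k)
  -- the product of q's is integrable
  have hprod_int : Integrable (fun sv : Fin (K + 1) → S => ∏ k : Fin (K + 1), q (sv k)) μ := by
    have := Integrable.fintype_prod (E := S) (f := fun _ : Fin (K + 1) => q) fun _ => hq_int
    simpa [hμ, MeasureTheory.volume_pi] using this
  -- each g j is integrable (dominated by the product of q's)
  have hg_int : ∀ j, Integrable (g j) μ := by
    intro j
    refine hprod_int.mono' (hg_meas j).aestronglyMeasurable ?_
    refine Filter.Eventually.of_forall fun sv => ?_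
    have h1 : 0 < ∑ k : Fin (K + 1), f (sv k) := hsum_pos sv
    have h2 : 0 ≤ g j sv := by
      apply div_nonneg _ h1.le
      exact mul_nonneg (hf_pos _).le (Finset.prod_nonneg fun k _ => (hq_pos _).le)
    rw [Real.norm_of_nonneg h2]
    have hle : f (sv j) ≤ ∑ k : Fin (K + 1), f (sv k) :=
      Finset.single_le_sum (fun k _ => (hf_pos (sv k)).le) (Finset.mem_univ j)
    have hp : 0 ≤ ∏ k : Fin (K + 1), q (sv k) :=
      Finset.prod_nonneg fun k _ => (hq_pos _).le
    rw [hg, div_le_iff₀ h1]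
    calc f (sv j) * ∏ k : Fin (K + 1), q (sv k)
        ≤ (∑ k : Fin (K + 1), f (sv k)) * ∏ k : Fin (K + 1), q (sv k) := by
          exact mul_le_mul_of_nonneg_right hle hp
      _ = (∏ k : Fin (K + 1), q (sv k)) * ∑ k : Fin (K + 1), f (sv k) := by ring
  -- symmetry: all ∫ g j are equal
  have hsym : ∀ j, ∫ sv, g j sv ∂μ = ∫ sv, g 0 sv ∂μ := by
    intro j
    set e : Fin (K + 1) ≃ Fin (K + 1) := Equiv.swap j 0 with he
    have hmp : MeasurePreserving (MeasurableEquiv.piCongrLeft (fun _ : Fin (K + 1) => S) e) μ μ :=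
      MeasureTheory.measurePreserving_piCongrLeft (fun _ : Fin (K + 1) => νS) e
    have key : ∀ sv, g 0 ((MeasurableEquiv.piCongrLeft (fun _ : Fin (K + 1) => S) e) sv)
        = g j sv := by
      intro sv
      set T := (MeasurableEquiv.piCongrLeft (fun _ : Fin (K + 1) => S) e) sv with hT
      have happ : ∀ i, T (e i) = sv i := fun i => by
        rw [hT]
        exact MeasurableEquiv.piCongrLeft_apply_apply
          (β := fun _ : Fin (K + 1) => S) e sv i
      have h0 : T 0 = sv j := by
        have : e j = 0 := by rw [he]; exact Equiv.swap_apply_left j 0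
        rw [← this, happ]
      have hprod : (∏ k : Fin (K + 1), q (T k)) = ∏ k : Fin (K + 1), q (sv k) := by
        rw [← Equiv.prod_comp e (fun k => q (T k))]
        exact Finset.prod_congr rfl fun k _ => by rw [happ]
      have hsum2 : (∑ k : Fin (K + 1), f (T k)) = ∑ k : Fin (K + 1), f (sv k) := by
        rw [← Equiv.sum_comp e (fun k => f (T k))]
        exact Finset.sum_congr rfl fun k _ => by rw [happ]
      simp only [hg]
      rw [h0, hprod, hsum2]
    calc ∫ sv, g j sv ∂μ
        = ∫ sv, g 0 ((MeasurableEquiv.piCongrLeft (fun _ : Fin (K + 1) => S) e) sv) ∂μ := by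
          exact (integral_congr_ae (Filter.Eventually.of_forall fun sv => (key sv).symm))
      _ = ∫ sv, g 0 sv ∂μ :=
          hmp.integral_comp (MeasurableEquiv.measurableEmbedding _) _
  -- the sum of all g j has integral 1
  have hsum_int : ∫ sv, (∑ j : Fin (K + 1), g j sv) ∂μ = 1 := by
    have heq : ∀ sv, (∑ j : Fin (K + 1), g j sv) = ∏ k : Fin (K + 1), q (sv k) := by
      intro sv
      simp only [hg]
      rw [← Finset.sum_div, ← Finset.sum_mul, mul_comm
        (∑ j : Fin (K + 1), f (sv j)) (∏ k : Fin (K + 1), q (sv k)), mul_div_assoc,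
        div_self (hsum_pos sv).ne', mul_one]
    rw [integral_congr_ae (Filter.Eventually.of_forall heq)]
    have hv : μ = (volume : Measure (Fin (K + 1) → S)) := MeasureTheory.volume_pi.symm
    rw [hμ, MeasureTheory.integral_fintype_prod_eq_pow q,
      hq_norm, one_pow]
  -- conclude
  have hfin : (∑ j : Fin (K + 1), ∫ sv, g j sv ∂μ) = 1 := by
    rw [← integral_finset_sum _ fun j _ => hg_int j]
    exact hsum_int
  have : (K + 1 : ℝ) * ∫ sv, g 0 sv ∂μ = 1 := by
    have h2 : (∑ j : Fin (K + 1), ∫ sv, g j sv ∂μ)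
        = (K + 1 : ℝ) * ∫ sv, g 0 sv ∂μ := by
      rw [Finset.sum_congr rfl fun j _ => hsym j, Finset.sum_const, Finset.card_univ,
        Fintype.card_fin, nsmul_eq_mul, Nat.cast_add, Nat.cast_one]
    rw [← h2]
    exact hfin
  calc ∫ sv, w sv ∂μ = ∫ sv, (K + 1 : ℝ) * g 0 sv ∂μ :=
        integral_congr_ae (Filter.Eventually.of_forall hw')
    _ = (K + 1 : ℝ) * ∫ sv, g 0 sv ∂μ := integral_const_mul _ _
    _ = 1 := this
end

section
/- The function $v(s^{(0:K+1)}\mid a) := p(s^{(0)}|a)\,\prod_{k=1}^{K+1} q(s^{(k)})\cdot \frac{\frac{1}{K+2}\sum_{k=0}^{K+1}\pi(a|s^{(k)})}{\frac{1}{K+1}\sum_{k=0}^{K}\pi(a|s^{(k)})}$ integrates to $1$ over $(s^{(0)},\ldots,s^{(K+1)})$, i.e. it is a normalized probability density. -/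
open MeasureTheory Real

/-- The density
`v(s⁰⁻ᴷ⁺¹ | a) = p(s⁰|a) ∏_{k=1}^{K+1} q(sᵏ) · ((1/(K+2)) ∑_{k=0}^{K+1} π(a|sᵏ)) / ((1/(K+1)) ∑_{k=0}^{K} π(a|sᵏ))`
integrates to one over the tuple `(s⁰, …, sᴷ⁺¹)`. -/
theorem v_is_normalized_density
    {S : Type*} [MeasurableSpace S]
    (νS : Measure S) [SigmaFinite νS]
    (q : S → ℝ) (f : S → ℝ)  -- `f s` is `π(a|s)` for the fixed action `a`
    (hq_pos : ∀ s, 0 < q s) (hf_pos : ∀ s, 0 < f s)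
    (hq_meas : Measurable q) (hf_meas : Measurable f)
    (hq_norm : ∫ s, q s ∂νS = 1)
    (πa : ℝ) (hπa : πa = ∫ s, f s * q s ∂νS) (hπa_pos : 0 < πa)
    (post : S → ℝ) (hpost : ∀ s, post s = f s * q s / πa)
    (K : ℕ) (hK : 0 < K)
    (v : (Fin (K + 2) → S) → ℝ)
    (hv : ∀ sv, v sv =
      post (sv 0) * (∏ k ∈ Finset.univ.erase (0 : Fin (K + 2)), q (sv k)) *
        (((1 / (K + 2 : ℝ)) * ∑ k : Fin (K + 2), f (sv k)) /
          ((1 / (K + 1 : ℝ)) * ∑ k : Fin (K + 1), f (sv k.castSucc)))) :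
    ∫ sv, v sv ∂(Measure.pi fun _ : Fin (K + 2) => νS) = 1 := by
  classical
  letI : MeasureSpace S := ⟨νS⟩
  have hK1 : ((K : ℝ) + 1) ≠ 0 := by positivity
  have hK2 : ((K : ℝ) + 2) ≠ 0 := by positivity
  -- basic integrability
  have hq_int : Integrable q νS := by
    by_contra h
    rw [integral_undef h] at hq_norm
    exact one_ne_zero hq_norm.symm
  have hfq_int : Integrable (fun s => f s * q s) νS := by
    by_contra h
    rw [integral_undef h] at hπa
    exact hπa_pos.ne' hπa
  set μpi := (Measure.pi fun _ : Fin (K + 2) => νS) with hμpi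
  have hvol : μpi = (volume : Measure (Fin (K + 2) → S)) := rfl
  set P : (Fin (K + 2) → S) → ℝ := fun sv => ∏ k, q (sv k) with hP
  set Sall : (Fin (K + 2) → S) → ℝ := fun sv => ∑ k : Fin (K + 2), f (sv k) with hSall
  set Ssub : (Fin (K + 2) → S) → ℝ := fun sv => ∑ k : Fin (K + 1), f (sv k.castSucc) with hSsub
  set R : (Fin (K + 2) → S) → ℝ :=
    fun sv => ((1 / (K + 2 : ℝ)) * Sall sv) / ((1 / (K + 1 : ℝ)) * Ssub sv) with hR
  set G : Fin (K + 1) → (Fin (K + 2) → S) → ℝ :=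
    fun j sv => P sv * f (sv j.castSucc) * R sv with hG
  have hPpos : ∀ sv, 0 < P sv := fun sv => Finset.prod_pos fun k _ => hq_pos _
  have hSsub_pos : ∀ sv, 0 < Ssub sv :=
    fun sv => Finset.sum_pos (fun k _ => hf_pos _) Finset.univ_nonempty
  have hPmeas : Measurable P :=
    Finset.measurable_prod _ fun k _ => hq_meas.comp (measurable_pi_apply k)
  have hSallmeas : Measurable Sall :=
    Finset.measurable_sum _ fun k _ => hf_meas.comp (measurable_pi_apply k)
  have hSsubmeas : Measurable Ssub :=
    Finset.measurable_sum _ fun k _ => hf_meas.comp (measurable_pi_apply _)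
  have hGmeas : ∀ j, Measurable (G j) := by
    intro j
    simp only [hG, hR]
    exact (hPmeas.mul (hf_meas.comp (measurable_pi_apply _))).mul
      ((measurable_const.mul hSallmeas).div (measurable_const.mul hSsubmeas))
  -- the basic product integrals
  have key_pt : ∀ (k0 : Fin (K + 2)) (sv : Fin (K + 2) → S),
      (∏ k, Function.update (fun _ : Fin (K + 2) => q) k0 (fun s => f s * q s) k (sv k))
        = P sv * f (sv k0) := by
    intro k0 sv
    simp only [hP]
    rw [← Finset.mul_prod_erase Finset.univ _ (Finset.mem_univ k0),
        ← Finset.mul_prod_erase Finset.univ (fun k => q (sv k)) (Finset.mem_univ k0)]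
    have h1 : (∏ x ∈ Finset.univ.erase k0,
        Function.update (fun _ : Fin (K + 2) => q) k0 (fun s => f s * q s) x (sv x))
        = ∏ x ∈ Finset.univ.erase k0, q (sv x) :=
      Finset.prod_congr rfl fun k hk => by
        simp only [Function.update_of_ne (Finset.ne_of_mem_erase hk)]
    rw [h1]
    simp only [Function.update_self]
    ring
  have hint_prod : ∀ k0 : Fin (K + 2),
      Integrable (fun sv => P sv * f (sv k0)) μpi := by
    intro k0
    have h1 : Integrable (fun sv : Fin (K + 2) → S =>
        ∏ k, Function.update (fun _ : Fin (K + 2) => q) k0 (fun s => f s * q s) k (sv k))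
        volume := by
      refine Integrable.fintype_prod (f := Function.update (fun _ : Fin (K + 2) => q) k0
        (fun s => f s * q s)) ?_
      intro i
      by_cases h : i = k0
      · subst h; simp only [Function.update_self]; exact hfq_int
      · simp only [Function.update_of_ne h]; exact hq_int
    rw [hvol]
    exact h1.congr (Filter.Eventually.of_forall fun sv => key_pt k0 sv)
  have hint_val : ∀ k0 : Fin (K + 2),
      ∫ sv, P sv * f (sv k0) ∂μpi = πa := by
    intro k0
    rw [hvol, integral_congr_ae (Filter.Eventually.of_forall fun sv => (key_pt k0 sv).symm),
      MeasureTheory.integral_fintype_prod_volume_eq_prod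
        (fun _ => Function.update (fun _ : Fin (K + 2) => q) k0 (fun s => f s * q s) _)]
    have hval : ∀ k : Fin (K + 2),
        (∫ x, Function.update (fun _ : Fin (K + 2) => q) k0 (fun s => f s * q s) k x)
          = if k = k0 then πa else 1 := by
      intro k
      by_cases h : k = k0
      · subst h; simp only [Function.update_self, if_pos]; exact hπa.symm
      · simp only [Function.update_of_ne h, if_neg h]; exact hq_norm
    rw [Finset.prod_congr rfl fun k _ => hval k,
      Finset.prod_ite_eq' Finset.univ k0 fun _ => πa, if_pos (Finset.mem_univ k0)]
  -- the swap step
  have hGswap : ∀ j : Fin (K + 1), ∫ sv, G j sv ∂μpi = ∫ sv, G 0 sv ∂μpi := by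
    intro j
    set e : Fin (K + 2) ≃ Fin (K + 2) :=
      Equiv.swap ((0 : Fin (K + 1)).castSucc) (j.castSucc) with he
    have hmp : MeasurePreserving
        (MeasurableEquiv.piCongrLeft (fun _ : Fin (K + 2) => S) e) μpi μpi :=
      measurePreserving_piCongrLeft (fun _ : Fin (K + 2) => νS) e
    rw [← hmp.integral_comp' (G 0)]
    refine integral_congr_ae (Filter.Eventually.of_forall fun sv => ?_)
    set T := MeasurableEquiv.piCongrLeft (fun _ : Fin (K + 2) => S) e with hTdef
    have hT : ∀ k, T sv (e k) = sv k :=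
      fun k => MeasurableEquiv.piCongrLeft_apply_apply (β := fun _ : Fin (K + 2) => S) e sv k
    have hPT : P (T sv) = P sv := by
      simp only [hP]
      calc (∏ k, q (T sv k)) = ∏ k, q (T sv (e k)) :=
            (Equiv.prod_comp e fun k => q (T sv k)).symm
        _ = ∏ k, q (sv k) := Finset.prod_congr rfl fun k _ => by rw [hT]
    have hSallT : Sall (T sv) = Sall sv := by
      simp only [hSall]
      calc (∑ k, f (T sv k)) = ∑ k, f (T sv (e k)) :=
            (Equiv.sum_comp e fun k => f (T sv k)).symm
        _ = ∑ k, f (sv k) := Finset.sum_congr rfl fun k _ => by rw [hT]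
    have hsw : ∀ k : Fin (K + 1), e k.castSucc = ((Equiv.swap (0 : Fin (K + 1)) j) k).castSucc := by
      intro k
      rw [he]
      exact (Fin.castSucc_injective (K + 1)).swap_apply 0 j k
    have hSsubT : Ssub (T sv) = Ssub sv := by
      simp only [hSsub]
      calc (∑ k : Fin (K + 1), f (T sv k.castSucc))
          = ∑ k : Fin (K + 1), f (T sv ((Equiv.swap (0 : Fin (K + 1)) j) k).castSucc) :=
            (Equiv.sum_comp (Equiv.swap (0 : Fin (K + 1)) j)
              fun k => f (T sv k.castSucc)).symm
        _ = ∑ k : Fin (K + 1), f (sv k.castSucc) := by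
            refine Finset.sum_congr rfl fun k _ => ?_
            rw [← hsw k, hT]
    have hfT : T sv ((0 : Fin (K + 1)).castSucc) = sv (j.castSucc) := by
      rw [show ((0 : Fin (K + 1)).castSucc) = e (j.castSucc) from (Equiv.swap_apply_right _ _).symm]
      exact hT _
    simp only [hG, hR]
    rw [hPT, hfT, hSallT, hSsubT]
  -- integrability of each G j
  have hGint : ∀ j : Fin (K + 1), Integrable (G j) μpi := by
    intro j
    refine Integrable.mono' ((hint_prod j.castSucc).add (hint_prod (Fin.last (K + 1))))
      (hGmeas j).aestronglyMeasurable (Filter.Eventually.of_forall fun sv => ?_)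
    simp only [hG, hR, Pi.add_apply]
    have ha : 0 < f (sv j.castSucc) := hf_pos _
    have hb : 0 < f (sv (Fin.last (K + 1))) := hf_pos _
    have hp : 0 < P sv := hPpos sv
    have hd : 0 < Ssub sv := hSsub_pos sv
    have had : f (sv j.castSucc) ≤ Ssub sv := by
      simp only [hSsub]
      exact Finset.single_le_sum (f := fun k : Fin (K + 1) => f (sv k.castSucc))
        (fun k _ => (hf_pos _).le) (Finset.mem_univ j)
    have hSallsv : Sall sv = Ssub sv + f (sv (Fin.last (K + 1))) := by
      simp only [hSall, hSsub]
      exact Fin.sum_univ_castSucc (n := K + 1) (f := fun k => f (sv k))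
    have hu : (0:ℝ) < 1 / ((K : ℝ) + 1) := by positivity
    have hw : (0:ℝ) < 1 / ((K : ℝ) + 2) := by positivity
    have hwu : (1 : ℝ) / ((K : ℝ) + 2) ≤ 1 / ((K : ℝ) + 1) := by
      apply one_div_le_one_div_of_le
      · positivity
      · linarith
    have hY : (0:ℝ) < 1 / ((K : ℝ) + 1) * Ssub sv := by positivity
    have hSa : (0:ℝ) < Sall sv := by
      simp only [hSall]
      exact Finset.sum_pos (fun k _ => hf_pos _) Finset.univ_nonempty
    have h0 : (0:ℝ) ≤ P sv * f (sv j.castSucc) *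
        (1 / (↑K + 2) * Sall sv / (1 / (↑K + 1) * Ssub sv)) :=
      mul_nonneg (mul_nonneg hp.le ha.le)
        (div_nonneg (mul_nonneg hw.le hSa.le) (mul_nonneg hu.le hd.le))
    rw [Real.norm_eq_abs, abs_of_nonneg h0, hSallsv, ← mul_div_assoc,
      div_le_iff₀ hY]
    nlinarith [mul_nonneg (mul_nonneg (mul_nonneg hp.le ha.le) hd.le) (sub_nonneg.2 hwu),
      mul_nonneg (mul_nonneg hp.le hb.le)
        (sub_nonneg.2 (mul_le_mul hwu had ha.le hu.le))]
  -- the pointwise sum identity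
  have hsum_pt : ∀ sv, ∑ j : Fin (K + 1), G j sv
      = ((K : ℝ) + 1) * (P sv * ((1 / (K + 2 : ℝ)) * Sall sv)) := by
    intro sv
    have hd : Ssub sv ≠ 0 := (hSsub_pos sv).ne'
    calc ∑ j : Fin (K + 1), G j sv
        = ∑ j : Fin (K + 1), f (sv j.castSucc) * (P sv * R sv) :=
          Finset.sum_congr rfl fun j _ => by simp only [hG]; ring
      _ = Ssub sv * (P sv * R sv) := by rw [← Finset.sum_mul, hSsub]
      _ = ((K : ℝ) + 1) * (P sv * ((1 / (K + 2 : ℝ)) * Sall sv)) := by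
          simp only [hR]
          field_simp
  -- integral of the symmetrized integrand
  have hNval : ∫ sv, P sv * ((1 / (K + 2 : ℝ)) * Sall sv) ∂μpi = πa := by
    have hpt : ∀ sv, P sv * ((1 / (K + 2 : ℝ)) * Sall sv)
        = (1 / (K + 2 : ℝ)) * ∑ k : Fin (K + 2), P sv * f (sv k) := by
      intro sv
      rw [← Finset.mul_sum, hSall]
      ring
    rw [integral_congr_ae (Filter.Eventually.of_forall hpt), integral_const_mul,
      integral_finset_sum _ fun k _ => hint_prod k,
      Finset.sum_congr rfl fun k _ => hint_val k, Finset.sum_const, Finset.card_univ,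
      Fintype.card_fin, nsmul_eq_mul]
    push_cast
    field_simp
  have hG0 : ∫ sv, G 0 sv ∂μpi = πa := by
    have h1 : ∑ j : Fin (K + 1), ∫ sv, G j sv ∂μpi = ((K : ℝ) + 1) * πa := by
      rw [← integral_finset_sum _ fun j _ => hGint j,
        integral_congr_ae (Filter.Eventually.of_forall hsum_pt), integral_const_mul, hNval]
    have h2 : ∑ j : Fin (K + 1), ∫ sv, G j sv ∂μpi
        = ((K : ℝ) + 1) * ∫ sv, G 0 sv ∂μpi := by
      rw [Finset.sum_congr rfl fun j _ => hGswap j, Finset.sum_const, Finset.card_univ,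
        Fintype.card_fin, nsmul_eq_mul]
      push_cast
      ring
    exact mul_left_cancel₀ hK1 (h2.symm.trans h1)
  -- conclusion
  have hveq : ∀ sv, v sv = πa⁻¹ * G 0 sv := by
    intro sv
    rw [hv, hpost]
    simp only [hG, hR, hP, hSall, hSsub, Fin.castSucc_zero]
    rw [← Finset.mul_prod_erase Finset.univ (fun k => q (sv k))
      (Finset.mem_univ (0 : Fin (K + 2)))]
    ring
  calc ∫ sv, v sv ∂μpi
      = ∫ sv, πa⁻¹ * G 0 sv ∂μpi :=
        integral_congr_ae (Filter.Eventually.of_forall hveq)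
    _ = πa⁻¹ * ∫ sv, G 0 sv ∂μpi := integral_const_mul _ _
    _ = 1 := by rw [hG0]; exact inv_mul_cancel₀ hπa_pos.ne'
end

section
/- The $K=1$ nested entropy estimator sits between the conditional entropy and the marginal entropy: with $\widetilde{H}_1 = \mathbb{E}_{a\sim\pi}\mathbb{E}_{s^{(0)}\sim p(\cdot|a)}\mathbb{E}_{s^{(1)}\sim q}\left[-\log\left(\frac{\pi(a|s^{(0)})+\pi(a|s^{(1)})}{2}\right)\right]$, it holds that $\widetilde{H}_1 \leq H(\pi)$; moreover $\widetilde{H}_0 := \mathbb{E}_{s\sim q}\mathbb{E}_{a\sim\pi(\cdot|s)}[-\log\pi(a|s)] = \mathbb{E}_{s\sim q}[H(\pi(\cdot|s))] \leq \widetilde{H}_1$. -/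
open MeasureTheory Real
open scoped ENNReal NNReal

/-- Elementary inequality `t·(-log t) ≤ t·(-log z) + (z - t)` for `t, z > 0`,
equivalent to `t·log(z/t) ≤ z - t`. -/
lemma nested_key_ineq {t z : ℝ} (ht : 0 < t) (hz : 0 < z) :
    t * (-Real.log t) ≤ t * (-Real.log z) + (z - t) := by
  have h := Real.log_le_sub_one_of_pos (div_pos hz ht)
  rw [Real.log_div hz.ne' ht.ne'] at h
  have h2 : t * (Real.log z - Real.log t) ≤ t * (z / t - 1) :=
    mul_le_mul_of_nonneg_left h ht.le
  have h3 : t * (z / t - 1) = z - t := by field_simp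
  nlinarith

/-- A real function with nonzero integral is integrable. -/
lemma nested_integrable_of_integral_ne_zero {α : Type*} [MeasurableSpace α] {μ : Measure α}
    {f : α → ℝ} (h : ∫ x, f x ∂μ ≠ 0) : Integrable f μ := by
  by_contra hc
  exact h (integral_undef hc)

/-- `max (-x) 0 = max x 0 - x`. -/
lemma nested_max_neg_eq {x : ℝ} : max (-x) 0 = max x 0 - x := by
  rcases le_total x 0 with hx | hx
  · rw [max_eq_left (by linarith), max_eq_right hx]; ring
  · rw [max_eq_right (by linarith), max_eq_left hx]; ring

/-- The `K = 1` nested entropy estimator sits between the expected conditional entropy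
(`K = 0` estimator) and the marginal entropy: `H̃₀ = E_{s∼q}[H(π(·|s))] ≤ H̃₁ ≤ H(π)`. -/
theorem nested_estimator_between_conditional_and_marginal
    {S A : Type*} [MeasurableSpace S] [MeasurableSpace A]
    (νS : Measure S) (νA : Measure A) [SigmaFinite νS] [SigmaFinite νA]
    (q : S → ℝ) (πc : A → S → ℝ)
    (hq_pos : ∀ s, 0 < q s) (hπ_pos : ∀ a s, 0 < πc a s)
    (hq_meas : Measurable q) (hπ_meas : Measurable (Function.uncurry πc))
    (hq_norm : ∫ s, q s ∂νS = 1)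
    (hπ_norm : ∀ s, ∫ a, πc a s ∂νA = 1)
    (πm : A → ℝ) (hπm : ∀ a, πm a = ∫ s, πc a s * q s ∂νS)
    (hπm_pos : ∀ a, 0 < πm a)
    (post : A → S → ℝ) (hpost : ∀ a s, post a s = πc a s * q s / πm a)
    (H : ℝ) (hH : H = -∫ a, πm a * Real.log (πm a) ∂νA)
    (Ht0 : ℝ)
    (hHt0 : Ht0 = ∫ s, q s * (∫ a, πc a s * (-Real.log (πc a s)) ∂νA) ∂νS)
    (Ht1 : ℝ)
    (hHt1 : Ht1 = ∫ a, πm a *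
      (∫ s0, post a s0 *
        (∫ s1, q s1 * (-Real.log ((πc a s0 + πc a s1) / 2)) ∂νS) ∂νS) ∂νA)
    (hint_H : Integrable (fun a => πm a * Real.log (πm a)) νA)
    (hint0 : ∀ s, Integrable (fun a => πc a s * Real.log (πc a s)) νA)
    (hint0_out : Integrable
      (fun s => q s * (∫ a, πc a s * (-Real.log (πc a s)) ∂νA)) νS)
    (hint1 : ∀ a, Integrable (fun p : S × S =>
      post a p.1 * q p.2 * (-Real.log ((πc a p.1 + πc a p.2) / 2))) (νS.prod νS))
    (hint1_out : Integrable (fun a => πm a *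
      (∫ s0, post a s0 *
        (∫ s1, q s1 * (-Real.log ((πc a s0 + πc a s1) / 2)) ∂νS) ∂νS)) νA) :
    Ht1 ≤ H ∧
    Ht0 = ∫ s, q s * (-∫ a, πc a s * Real.log (πc a s) ∂νA) ∂νS ∧
    Ht0 ≤ Ht1 := by
  -- ## Basic integrability facts
  have hq_int : Integrable q νS :=
    nested_integrable_of_integral_ne_zero (by rw [hq_norm]; norm_num)
  have hπa_int : ∀ s, Integrable (fun a => πc a s) νA := fun s =>
    nested_integrable_of_integral_ne_zero (by rw [hπ_norm s]; norm_num)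
  have hμa_int : ∀ a, Integrable (fun s => πc a s * q s) νS := fun a =>
    nested_integrable_of_integral_ne_zero (by rw [← hπm a]; exact (hπm_pos a).ne')
  -- measurability
  have hπc_meas : Measurable (fun p : A × S => πc p.1 p.2) := hπ_meas
  have hπm_meas : Measurable πm := by
    have h1 : StronglyMeasurable (fun p : A × S => πc p.1 p.2 * q p.2) :=
      (hπc_meas.mul (hq_meas.comp measurable_snd)).stronglyMeasurable
    have h2 : StronglyMeasurable fun a => ∫ s, πc a s * q s ∂νS :=
      h1.integral_prod_right'
    have : πm = fun a => ∫ s, πc a s * q s ∂νS := funext hπm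
    rw [this]
    exact h2.measurable
  -- ## The joint function h(a,s) = πc·q·(-log πc)
  set h : A × S → ℝ := fun p => πc p.1 p.2 * q p.2 * (-Real.log (πc p.1 p.2)) with hh_def
  have hh_meas : Measurable h :=
    (hπc_meas.mul (hq_meas.comp measurable_snd)).mul
      ((Real.measurable_log.comp hπc_meas).neg)
  -- sections of h over A are integrable, for every s
  have hsec : ∀ s, Integrable (fun a => h (a, s)) νA := by
    intro s
    have : (fun a => h (a, s)) = fun a => -(q s * (πc a s * Real.log (πc a s))) := by
      funext a; simp only [hh_def]; ring
    rw [this]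
    exact (((hint0 s).const_mul (q s))).neg
  -- per-s integral of h
  have hsum : ∀ s, ∫ a, h (a, s) ∂νA
      = q s * (∫ a, πc a s * (-Real.log (πc a s)) ∂νA) := by
    intro s
    have : (fun a => h (a, s)) = fun a => q s * (πc a s * (-Real.log (πc a s))) := by
      funext a; simp only [hh_def]; ring
    rw [this, integral_const_mul]
  -- ## Auxiliary integrable dominating function D
  set V : A × S → ℝ := fun p => πc p.1 p.2 * q p.2 * (-Real.log (πm p.1)) with hV_def
  have hV_meas : Measurable V :=
    (hπc_meas.mul (hq_meas.comp measurable_snd)).mul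
      ((Real.measurable_log.comp (hπm_meas.comp measurable_fst)).neg)
  have hV_int : Integrable V (νA.prod νS) := by
    rw [integrable_prod_iff hV_meas.aestronglyMeasurable]
    constructor
    · refine .of_forall fun a => ?_
      have : (fun s => V (a, s)) = fun s => (-Real.log (πm a)) * (πc a s * q s) := by
        funext s; simp only [hV_def]; ring
      rw [this]
      exact (hμa_int a).const_mul _
    · have he : (fun a => ∫ s, ‖V (a, s)‖ ∂νS) = fun a => |πm a * Real.log (πm a)| := by
        funext a
        have : (fun s => ‖V (a, s)‖) = fun s => |Real.log (πm a)| * (πc a s * q s) := by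
          funext s
          simp only [hV_def, Real.norm_eq_abs]
          rw [abs_mul, abs_neg, abs_of_nonneg
            (mul_nonneg (hπ_pos a s).le (hq_pos s).le)]
          ring
        rw [this, integral_const_mul, ← hπm a, abs_mul,
          abs_of_pos (hπm_pos a)]
        ring
      rw [he]
      exact hint_H.abs
  have hμpm_meas : Measurable (fun p : A × S => πc p.1 p.2 * q p.2) :=
    hπc_meas.mul (hq_meas.comp measurable_snd)
  have hμ_prod_int : Integrable (fun p : A × S => πc p.1 p.2 * q p.2) (νA.prod νS) := by
    rw [integrable_prod_iff' hμpm_meas.aestronglyMeasurable]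
    constructor
    · refine .of_forall fun s => ?_
      exact (hπa_int s).mul_const (q s)
    · have he : (fun s => ∫ a, ‖πc a s * q s‖ ∂νA) = q := by
        funext s
        have : (fun a => ‖πc a s * q s‖) = fun a => πc a s * q s := by
          funext a
          exact norm_of_nonneg (mul_nonneg (hπ_pos a s).le (hq_pos s).le)
        rw [this, integral_mul_const, hπ_norm s, one_mul]
      rw [he]
      exact hq_int
  have hπm_int : Integrable πm νA := by
    have := hμ_prod_int.integral_prod_left
    have he : πm = fun a => ∫ s, πc a s * q s ∂νS := funext hπm
    rw [he]
    exact this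
  set D : A × S → ℝ := fun p => |V p| + πm p.1 * q p.2 with hD_def
  have hD_int : Integrable D (νA.prod νS) :=
    hV_int.abs.add (hπm_int.mul_prod hq_int)
  have hD_nonneg : ∀ p, 0 ≤ D p := fun p =>
    add_nonneg (abs_nonneg _) (mul_nonneg (hπm_pos p.1).le (hq_pos p.2).le)
  -- pointwise bound : h ≤ D
  have hhD : ∀ p, h p ≤ D p := by
    intro p
    have k := nested_key_ineq (hπ_pos p.1 p.2) (hπm_pos p.1)
    have k2 := mul_le_mul_of_nonneg_left k (hq_pos p.2).le
    have habs : V p ≤ |V p| := le_abs_self _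
    simp only [hh_def, hV_def, hD_def] at *
    nlinarith [mul_nonneg (hq_pos p.2).le (hπ_pos p.1 p.2).le]
  -- ## Joint integrability of h via positive/negative parts
  set hp : A × S → ℝ := fun p => max (h p) 0 with hp_def
  set hm : A × S → ℝ := fun p => max (-h p) 0 with hm_def
  have hp_meas : Measurable hp := hh_meas.max measurable_const
  have hm_meas : Measurable hm := hh_meas.neg.max measurable_const
  have hp_le : ∀ p, hp p ≤ D p := fun p => max_le (hhD p) (hD_nonneg p)
  have hlint_hp : ∫⁻ p, ENNReal.ofReal (hp p) ∂(νA.prod νS) < ⊤ := by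
    calc ∫⁻ p, ENNReal.ofReal (hp p) ∂(νA.prod νS)
        ≤ ∫⁻ p, ENNReal.ofReal (D p) ∂(νA.prod νS) :=
          lintegral_mono fun p => ENNReal.ofReal_le_ofReal (hp_le p)
      _ = ENNReal.ofReal (∫ p, D p ∂(νA.prod νS)) :=
          (ofReal_integral_eq_lintegral_ofReal hD_int
            (.of_forall hD_nonneg)).symm
      _ < ⊤ := ENNReal.ofReal_lt_top
  -- positive-part sections
  have hpsec : ∀ s, Integrable (fun a => hp (a, s)) νA := fun s => (hsec s).pos_part
  have hmsec : ∀ s, Integrable (fun a => hm (a, s)) νA := fun s => (hsec s).neg.pos_part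
  have hp_sum_meas : Measurable (fun s => ∫ a, hp (a, s) ∂νA) := by
    have h1 : StronglyMeasurable fun s => ∫ a, (fun a s => hp (a, s)) a s ∂νA :=
      MeasureTheory.StronglyMeasurable.integral_prod_left (μ := νA)
        (f := fun a s => hp (a, s)) hp_meas.stronglyMeasurable
    exact h1.measurable
  have hlint_hp_symm : ∫⁻ s, ∫⁻ a, ENNReal.ofReal (hp (a, s)) ∂νA ∂νS < ⊤ := by
    rw [← lintegral_prod_symm _ (hp_meas.ennreal_ofReal.aemeasurable)]
    exact hlint_hp
  have hlint_hm : ∫⁻ p, ENNReal.ofReal (hm p) ∂(νA.prod νS) < ⊤ := by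
    rw [lintegral_prod_symm _ (hm_meas.ennreal_ofReal.aemeasurable)]
    have hbound : ∀ s, ∫⁻ a, ENNReal.ofReal (hm (a, s)) ∂νA
        ≤ ENNReal.ofReal (∫ a, hp (a, s) ∂νA)
          + ENNReal.ofReal ‖q s * (∫ a, πc a s * (-Real.log (πc a s)) ∂νA)‖ := by
      intro s
      have e1 : ∫⁻ a, ENNReal.ofReal (hm (a, s)) ∂νA
          = ENNReal.ofReal (∫ a, hm (a, s) ∂νA) :=
        (ofReal_integral_eq_lintegral_ofReal (hmsec s)
          (.of_forall fun a => le_max_right _ 0)).symm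
      have e2 : ∫ a, hm (a, s) ∂νA
          = (∫ a, hp (a, s) ∂νA) - q s * (∫ a, πc a s * (-Real.log (πc a s)) ∂νA) := by
        have : (fun a => hm (a, s)) = fun a => hp (a, s) - h (a, s) := by
          funext a; simp only [hm_def, hp_def]; exact nested_max_neg_eq
        rw [this, integral_sub (hpsec s) (hsec s), hsum s]
      rw [e1, e2]
      calc ENNReal.ofReal
            ((∫ a, hp (a, s) ∂νA) - q s * (∫ a, πc a s * (-Real.log (πc a s)) ∂νA))
          ≤ ENNReal.ofReal ((∫ a, hp (a, s) ∂νA)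
              + ‖q s * (∫ a, πc a s * (-Real.log (πc a s)) ∂νA)‖) := by
            apply ENNReal.ofReal_le_ofReal
            have := neg_abs_le (q s * (∫ a, πc a s * (-Real.log (πc a s)) ∂νA))
            rw [Real.norm_eq_abs]
            linarith
        _ = ENNReal.ofReal (∫ a, hp (a, s) ∂νA)
              + ENNReal.ofReal ‖q s * (∫ a, πc a s * (-Real.log (πc a s)) ∂νA)‖ := by
            rw [ENNReal.ofReal_add (integral_nonneg fun a => le_max_right _ 0)
              (norm_nonneg _)]
    calc ∫⁻ s, ∫⁻ a, ENNReal.ofReal (hm (a, s)) ∂νA ∂νS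
        ≤ ∫⁻ s, (ENNReal.ofReal (∫ a, hp (a, s) ∂νA)
            + ENNReal.ofReal ‖q s * (∫ a, πc a s * (-Real.log (πc a s)) ∂νA)‖) ∂νS :=
          lintegral_mono hbound
      _ = (∫⁻ s, ENNReal.ofReal (∫ a, hp (a, s) ∂νA) ∂νS)
            + ∫⁻ s, ENNReal.ofReal ‖q s * (∫ a, πc a s * (-Real.log (πc a s)) ∂νA)‖ ∂νS :=
          lintegral_add_left hp_sum_meas.ennreal_ofReal _
      _ < ⊤ := by
          apply ENNReal.add_lt_top.mpr
          constructor
          · have e3 : ∀ s, ENNReal.ofReal (∫ a, hp (a, s) ∂νA)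
                = ∫⁻ a, ENNReal.ofReal (hp (a, s)) ∂νA := fun s =>
              ofReal_integral_eq_lintegral_ofReal (hpsec s)
                (.of_forall fun a => le_max_right _ 0)
            calc ∫⁻ s, ENNReal.ofReal (∫ a, hp (a, s) ∂νA) ∂νS
                = ∫⁻ s, ∫⁻ a, ENNReal.ofReal (hp (a, s)) ∂νA ∂νS :=
                  lintegral_congr e3
              _ < ⊤ := hlint_hp_symm
          · have e4 : ∀ s, ENNReal.ofReal
                ‖q s * (∫ a, πc a s * (-Real.log (πc a s)) ∂νA)‖
                = (‖q s * (∫ a, πc a s * (-Real.log (πc a s)) ∂νA)‖₊ : ℝ≥0∞) := by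
              intro s
              rw [← enorm_eq_nnnorm, Real.enorm_eq_ofReal_abs, Real.norm_eq_abs]
            calc ∫⁻ s, ENNReal.ofReal
                  ‖q s * (∫ a, πc a s * (-Real.log (πc a s)) ∂νA)‖ ∂νS
                = ∫⁻ s, (‖q s * (∫ a, πc a s * (-Real.log (πc a s)) ∂νA)‖₊ : ℝ≥0∞) ∂νS :=
                  lintegral_congr e4
              _ < ⊤ := hint0_out.hasFiniteIntegral
  have hh_int : Integrable h (νA.prod νS) := by
    refine ⟨hh_meas.aestronglyMeasurable, ?_⟩
    have key : ∀ p : A × S, (‖h p‖₊ : ℝ≥0∞)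
        = ENNReal.ofReal (hp p) + ENNReal.ofReal (hm p) := by
      intro p
      rw [← enorm_eq_nnnorm, Real.enorm_eq_ofReal_abs,
        ← ENNReal.ofReal_add (le_max_right _ 0) (le_max_right _ 0)]
      congr 1
      show |h p| = max (h p) 0 + max (-h p) 0
      rw [nested_max_neg_eq]
      rcases le_total (h p) 0 with hx | hx
      · rw [abs_of_nonpos hx, max_eq_right hx]; ring
      · rw [abs_of_nonneg hx, max_eq_left hx]; ring
    show ∫⁻ p, (‖h p‖₊ : ℝ≥0∞) ∂(νA.prod νS) < ⊤
    calc ∫⁻ p, (‖h p‖₊ : ℝ≥0∞) ∂(νA.prod νS)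
        = ∫⁻ p, (ENNReal.ofReal (hp p) + ENNReal.ofReal (hm p)) ∂(νA.prod νS) :=
          lintegral_congr key
      _ = (∫⁻ p, ENNReal.ofReal (hp p) ∂(νA.prod νS))
            + ∫⁻ p, ENNReal.ofReal (hm p) ∂(νA.prod νS) :=
          lintegral_add_left hp_meas.ennreal_ofReal _
      _ < ⊤ := ENNReal.add_lt_top.mpr ⟨hlint_hp, hlint_hm⟩
  -- ## Fubini : Ht0 = ∫ₐ ℓ a  where  ℓ a = ∫ₛ h (a, s)
  set ℓ : A → ℝ := fun a => ∫ s, h (a, s) ∂νS with hℓ_def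
  have hℓ_int : Integrable ℓ νA := hh_int.integral_prod_left
  have hHt0' : Ht0 = ∫ a, ℓ a ∂νA := by
    rw [hHt0]
    have e1 : ∫ s, q s * (∫ a, πc a s * (-Real.log (πc a s)) ∂νA) ∂νS
        = ∫ s, ∫ a, h (a, s) ∂νA ∂νS :=
      integral_congr_ae (.of_forall fun s => (hsum s).symm)
    rw [e1, ← integral_prod_symm _ hh_int, integral_prod _ hh_int]
  -- ## Per-a analysis of the K = 1 estimator
  set ra : A → ℝ := fun a => πm a *
      (∫ s0, post a s0 *
        (∫ s1, q s1 * (-Real.log ((πc a s0 + πc a s1) / 2)) ∂νS) ∂νS) with hra_def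
  set R : A → S × S → ℝ := fun a p =>
      πc a p.1 * q p.1 * q p.2 * (-Real.log ((πc a p.1 + πc a p.2) / 2)) with hR_def
  have hmp : ∀ a s, πm a * post a s = πc a s * q s := by
    intro a s
    rw [hpost, mul_comm, div_mul_cancel₀ _ (hπm_pos a).ne']
  have hpR : ∀ a (p : S × S), πm a *
      (post a p.1 * q p.2 * (-Real.log ((πc a p.1 + πc a p.2) / 2))) = R a p := by
    intro a p
    have e : πm a * (post a p.1 * q p.2 * (-Real.log ((πc a p.1 + πc a p.2) / 2)))
        = (πm a * post a p.1) * q p.2 * (-Real.log ((πc a p.1 + πc a p.2) / 2)) := by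
      ring
    rw [e, hmp a p.1]
  have hRint : ∀ a, Integrable (R a) (νS.prod νS) := by
    intro a
    have := (hint1 a).const_mul (πm a)
    have he : (fun p : S × S => πm a *
        (post a p.1 * q p.2 * (-Real.log ((πc a p.1 + πc a p.2) / 2)))) = R a :=
      funext (hpR a)
    rwa [he] at this
  have hReq : ∀ a, ra a = ∫ p, R a p ∂(νS.prod νS) := by
    intro a
    have e1 : ∫ p : S × S, post a p.1 * q p.2 *
          (-Real.log ((πc a p.1 + πc a p.2) / 2)) ∂(νS.prod νS)
        = ∫ s0, post a s0 *
          (∫ s1, q s1 * (-Real.log ((πc a s0 + πc a s1) / 2)) ∂νS) ∂νS := by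
      rw [integral_prod _ (hint1 a)]
      refine integral_congr_ae (.of_forall fun s0 => ?_)
      simp_rw [mul_assoc]
      rw [integral_const_mul]
    rw [hra_def]
    simp only
    rw [← e1, ← integral_const_mul]
    exact integral_congr_ae (.of_forall fun p => hpR a p)
  -- ### Upper bound : ra a ≤ -(πm a * log (πm a))
  have hra_le : ∀ a, ra a ≤ -(πm a * Real.log (πm a)) := by
    intro a
    -- swap invariance
    have hRsw_int : Integrable (fun p : S × S => R a p.swap) (νS.prod νS) := (hRint a).swap
    have hswap_eq : ∫ p : S × S, R a p.swap ∂(νS.prod νS)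
        = ∫ p, R a p ∂(νS.prod νS) := integral_prod_swap (R a)
    -- symmetrized integrand T
    set T : S × S → ℝ := fun p =>
        (πc a p.1 + πc a p.2) / 2 * (q p.1 * q p.2)
          * (-Real.log ((πc a p.1 + πc a p.2) / 2)) with hT_def
    have hT_eq : T = fun p => (R a p + R a p.swap) / 2 := by
      funext p
      simp only [hT_def, hR_def, Prod.fst_swap, Prod.snd_swap]
      rw [add_comm (πc a p.2) (πc a p.1)]
      ring
    have hT_int : Integrable T (νS.prod νS) := by
      rw [hT_eq]
      exact ((hRint a).add hRsw_int).div_const 2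
    have hT_val : ∫ p, T p ∂(νS.prod νS) = ∫ p, R a p ∂(νS.prod νS) := by
      rw [hT_eq]
      rw [integral_div, integral_add (hRint a) hRsw_int, hswap_eq]
      ring
    -- the mass function Fq
    set Fq : S × S → ℝ := fun p => (πc a p.1 + πc a p.2) / 2 * (q p.1 * q p.2) with hFq_def
    have hFq_int : Integrable Fq (νS.prod νS) := by
      have h1 : Integrable (fun p : S × S => (πc a p.1 * q p.1) * q p.2) (νS.prod νS) :=
        (hμa_int a).mul_prod hq_int
      have h2 : Integrable (fun p : S × S => q p.1 * (πc a p.2 * q p.2)) (νS.prod νS) :=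
        hq_int.mul_prod (hμa_int a)
      have he : Fq = fun p : S × S =>
          ((πc a p.1 * q p.1) * q p.2 + q p.1 * (πc a p.2 * q p.2)) / 2 := by
        funext p; simp only [hFq_def]; ring
      rw [he]
      exact (h1.add h2).div_const 2
    have hFq_val : ∫ p, Fq p ∂(νS.prod νS) = πm a := by
      have he : Fq = fun p : S × S =>
          ((πc a p.1 * q p.1) * q p.2 + q p.1 * (πc a p.2 * q p.2)) / 2 := by
        funext p; simp only [hFq_def]; ring
      have i1 : ∫ p : S × S, (πc a p.1 * q p.1) * q p.2 ∂(νS.prod νS)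
          = (∫ s, πc a s * q s ∂νS) * ∫ s, q s ∂νS :=
        integral_prod_mul (fun s => πc a s * q s) q
      have i2 : ∫ p : S × S, q p.1 * (πc a p.2 * q p.2) ∂(νS.prod νS)
          = (∫ s, q s ∂νS) * ∫ s, πc a s * q s ∂νS :=
        integral_prod_mul q (fun s => πc a s * q s)
      rw [he, integral_div, integral_add ((hμa_int a).mul_prod hq_int)
        (hq_int.mul_prod (hμa_int a)), i1, i2, hq_norm, ← hπm a]
      ring
    have hqq_int : Integrable (fun p : S × S => q p.1 * q p.2) (νS.prod νS) :=
      hq_int.mul_prod hq_int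
    have hqq_val : ∫ p : S × S, q p.1 * q p.2 ∂(νS.prod νS) = 1 := by
      rw [integral_prod_mul, hq_norm]; norm_num
    -- dominating linearization U
    set U : S × S → ℝ := fun p =>
        Fq p * (-Real.log (πm a)) + (πm a * (q p.1 * q p.2) - Fq p) with hU_def
    have hU_int : Integrable U (νS.prod νS) :=
      (hFq_int.mul_const _).add ((hqq_int.const_mul (πm a)).sub hFq_int)
    have hTU : ∀ p, T p ≤ U p := by
      intro p
      have hf_pos : 0 < (πc a p.1 + πc a p.2) / 2 := by
        have := hπ_pos a p.1; have := hπ_pos a p.2; linarith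
      have k := nested_key_ineq hf_pos (hπm_pos a)
      have k2 := mul_le_mul_of_nonneg_right k
        (mul_nonneg (hq_pos p.1).le (hq_pos p.2).le)
      simp only [hT_def, hU_def, hFq_def]
      nlinarith
    have hU1 : Integrable (fun p : S × S => Fq p * (-Real.log (πm a))) (νS.prod νS) :=
      hFq_int.mul_const _
    have hU2 : Integrable (fun p : S × S => πm a * (q p.1 * q p.2) - Fq p) (νS.prod νS) :=
      (hqq_int.const_mul (πm a)).sub hFq_int
    have hU_val : ∫ p, U p ∂(νS.prod νS) = -(πm a * Real.log (πm a)) := by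
      have e0 : ∫ p, U p ∂(νS.prod νS) = ∫ p : S × S,
          (Fq p * (-Real.log (πm a)) + (πm a * (q p.1 * q p.2) - Fq p)) ∂(νS.prod νS) := rfl
      rw [e0, integral_add hU1 hU2, integral_mul_const,
        integral_sub (hqq_int.const_mul (πm a)) hFq_int, integral_const_mul,
        hqq_val, hFq_val]
      ring
    calc ra a = ∫ p, R a p ∂(νS.prod νS) := hReq a
      _ = ∫ p, T p ∂(νS.prod νS) := hT_val.symm
      _ ≤ ∫ p, U p ∂(νS.prod νS) := integral_mono hT_int hU_int hTU
      _ = -(πm a * Real.log (πm a)) := hU_val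
  -- ### Lower bound : ℓ a ≤ ra a  (for a.e. a)
  have hℓra : ∀ᵐ a ∂νA, ℓ a ≤ ra a := by
    filter_upwards [hh_int.prod_right_ae] with a hsa
    -- hsa : Integrable (fun s => h (a, s)) νS
    set L : S × S → ℝ := fun p => h (a, p.1) * q p.2 with hL_def
    have hL_int : Integrable L (νS.prod νS) := hsa.mul_prod hq_int
    have hL_val : ∫ p, L p ∂(νS.prod νS) = ℓ a := by
      have i1 : ∫ p : S × S, h (a, p.1) * q p.2 ∂(νS.prod νS)
          = (∫ s, h (a, s) ∂νS) * ∫ s, q s ∂νS :=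
        integral_prod_mul (fun s => h (a, s)) q
      rw [hL_def]
      simp only
      rw [i1, hq_norm, mul_one]
    set B : S × S → ℝ := fun p =>
        (q p.1 * (πc a p.2 * q p.2) - (πc a p.1 * q p.1) * q p.2) / 2 with hB_def
    have hB_int : Integrable B (νS.prod νS) :=
      ((hq_int.mul_prod (hμa_int a)).sub ((hμa_int a).mul_prod hq_int)).div_const 2
    have hB_val : ∫ p, B p ∂(νS.prod νS) = 0 := by
      have i1 : ∫ p : S × S, (πc a p.1 * q p.1) * q p.2 ∂(νS.prod νS)
          = (∫ s, πc a s * q s ∂νS) * ∫ s, q s ∂νS :=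
        integral_prod_mul (fun s => πc a s * q s) q
      have i2 : ∫ p : S × S, q p.1 * (πc a p.2 * q p.2) ∂(νS.prod νS)
          = (∫ s, q s ∂νS) * ∫ s, πc a s * q s ∂νS :=
        integral_prod_mul q (fun s => πc a s * q s)
      rw [hB_def]
      simp only
      rw [integral_div, integral_sub (hq_int.mul_prod (hμa_int a))
        ((hμa_int a).mul_prod hq_int), i1, i2, hq_norm, ← hπm a]
      ring
    have hLRB : ∀ p, L p ≤ R a p + B p := by
      intro p
      have hf_pos : 0 < (πc a p.1 + πc a p.2) / 2 := by
        have := hπ_pos a p.1; have := hπ_pos a p.2; linarith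
      have k := nested_key_ineq (hπ_pos a p.1) hf_pos
      have k2 := mul_le_mul_of_nonneg_right k
        (mul_nonneg (hq_pos p.1).le (hq_pos p.2).le)
      simp only [hL_def, hR_def, hB_def, hh_def]
      nlinarith
    calc ℓ a = ∫ p, L p ∂(νS.prod νS) := hL_val.symm
      _ ≤ ∫ p, (R a p + B p) ∂(νS.prod νS) :=
          integral_mono hL_int ((hRint a).add hB_int) hLRB
      _ = (∫ p, R a p ∂(νS.prod νS)) + ∫ p, B p ∂(νS.prod νS) :=
          integral_add (hRint a) hB_int
      _ = ra a := by rw [hB_val, ← hReq a]; ring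
  -- ## Conclusion
  have hHt1' : Ht1 = ∫ a, ra a ∂νA := hHt1
  have hra_int : Integrable ra νA := hint1_out
  refine ⟨?_, ?_, ?_⟩
  · -- Ht1 ≤ H
    rw [hHt1', hH, ← integral_neg]
    exact integral_mono hra_int hint_H.neg hra_le
  · -- rewriting of Ht0
    rw [hHt0]
    refine integral_congr_ae (.of_forall fun s => ?_)
    dsimp only
    rw [← integral_neg]
    congr 1
    refine integral_congr_ae (.of_forall fun a => ?_)
    dsimp only
    ring
  · -- Ht0 ≤ Ht1
    rw [hHt0', hHt1']
    exact integral_mono_ae hℓ_int hra_int hℓra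
end
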